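/- Let k be a commutative ring which is a ℚ-algebra, A an associative unital k-algebra, and λ ∈ k. The map λ̂ : A^ℕ → A^ℕ defined by λ̂(a)_n = λ^n·a_n is a morphism of k-algebras from (A^ℕ, ·^λ) to (A^ℕ, ·^1): it is k-linear, sends the unit J = (1,0,0,…) to itself, and satisfies λ̂(a ·^λ b) = λ̂(a) ·^1 λ̂(b) for all a, b ∈ A^ℕ. -/

import Mathlib

/-- The `lam`-weighted Hurwitz product on sequences:
`(a ·^lam b)_n = ∑_{r+s+t=n} (n!/(r!·s!·t!)) · lam^t · a_{r+t} · b_{s+t}`,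
the sum ranging over triples `(r,s,t)` with `r+s+t = n`, enumerated as
`r = x.1`, `s = y.1`, `t = y.2`. -/
noncomputable def hur {k A : Type*} [CommRing k] [Ring A] [Algebra k A]
    (lam : k) (a b : ℕ → A) : ℕ → A := fun n =>
  ∑ x ∈ Finset.HasAntidiagonal.antidiagonal n, ∑ y ∈ Finset.HasAntidiagonal.antidiagonal x.2,
    (n.factorial / (x.1.factorial * y.1.factorial * y.2.factorial)) •
      (lam ^ y.2 • (a (x.1 + y.2) * b (y.1 + y.2)))

/-- The sequence `J = (1,0,0,…)`, the unit for the weighted Hurwitz products. -/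
def Jseq (A : Type*) [One A] [Zero A] : ℕ → A := fun n => if n = 0 then 1 else 0

/-- The map `λ̂(a)_n = λ^n · a_n`. -/
noncomputable def lamHat {k A : Type*} [CommRing k] [Ring A] [Algebra k A]
    (lam : k) (a : ℕ → A) : ℕ → A := fun n => lam ^ n • a n

/-- `λ̂` is a morphism of `k`-algebras `(A^ℕ, ·^λ) → (A^ℕ, ·^1)`:
it is `k`-linear, sends the unit `J` to itself, and `λ̂(a ·^λ b) = λ̂(a) ·^1 λ̂(b)`. -/
theorem stmt4 {k A : Type*} [CommRing k] [Algebra ℚ k] [Ring A] [Algebra k A] (lam : k) :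
    (∀ a b : ℕ → A, lamHat lam (a + b) = lamHat lam a + lamHat lam b) ∧
    (∀ (r : k) (a : ℕ → A), lamHat lam (r • a) = r • lamHat lam a) ∧
    (lamHat lam (Jseq A) = Jseq A) ∧
    (∀ a b : ℕ → A,
      lamHat lam (hur lam a b) = hur (1 : k) (lamHat lam a) (lamHat lam b)) := by
  refine ⟨?_, ?_, ?_, ?_⟩
  · intro a b; funext n; simp [lamHat, smul_add]
  · intro r a; funext n
    simp only [lamHat, Pi.smul_apply]
    exact smul_comm _ _ _
  · funext n; cases n <;> simp [lamHat, Jseq]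
  · intro a b; funext n
    simp only [lamHat, hur, Finset.smul_sum]
    refine Finset.sum_congr rfl fun x hx => Finset.sum_congr rfl fun y hy => ?_
    rw [Finset.HasAntidiagonal.mem_antidiagonal] at hx
    rw [Finset.HasAntidiagonal.mem_antidiagonal] at hy
    rw [one_pow, one_smul, smul_mul_smul_comm, smul_comm (_ : ℕ), smul_smul, smul_comm]
    congr 2
    rw [← pow_add, ← pow_add]
    congr 1
    omega
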